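/- Let η ∈ S(ℝ) be nonnegative with supp η ⊆ (−2, −1) and ∫ η = 2, and define ψ₀(z) = ∫_{−∞}^0 η(t) dt − iz = 2 − iz. Then for every z ∈ ℂ with Im(z) ≥ 0 and |z| ≤ 4, Re(ψ₀(z)) = 2 + Im(z) ≥ 2; moreover for all sufficiently small ε > 0, Re(ψ_ε(z)) = ∫_{−∞}^0 η(t) e^{εt·Im(z)} cos(εt·Re(z)) dt + Im(z) ≥ 3/2 for all z with |z| ≤ 4 and Im(z) ≥ 0. -/

import Mathlib

open MeasureTheory Complex

/-- `ψ_ε(z) = ∫_{−∞}^0 η(t) e^{−iεtz} dt − iz`. -/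
noncomputable def psiEps (η : ℝ → ℝ) (ε : ℝ) (z : ℂ) : ℂ :=
  (∫ t in Set.Iic (0 : ℝ), (η t : ℂ) * Complex.exp (-Complex.I * ε * t * z)) -
    Complex.I * z

/-- Let `η` be a nonnegative Schwartz bump with support in `(−2,−1)` and `∫ η = 2`.
Then for `|z| ≤ 4`, `Im z ≥ 0`: `Re ψ₀(z) = 2 + Im z ≥ 2`; moreover for all sufficiently
small `ε > 0` one has `Re ψ_ε(z) ≥ 3/2` on the same region. -/
theorem psiEps_re_lower_bound (η : SchwartzMap ℝ ℝ)
    (hη₀ : ∀ t, 0 ≤ η t)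
    (hηsupp : ∀ t, η t ≠ 0 → t ∈ Set.Ioo (-2 : ℝ) (-1))
    (hηint : (∫ t : ℝ, η t) = 2) :
    (∀ z : ℂ, 0 ≤ z.im → ‖z‖ ≤ 4 →
      (psiEps (⇑η) 0 z).re = 2 + z.im ∧ 2 ≤ (psiEps (⇑η) 0 z).re) ∧
    (∃ ε₀ : ℝ, 0 < ε₀ ∧ ∀ ε : ℝ, 0 < ε → ε ≤ ε₀ →
      ∀ z : ℂ, 0 ≤ z.im → ‖z‖ ≤ 4 → (3 : ℝ) / 2 ≤ (psiEps (⇑η) ε z).re) := by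
  have hsupp0 : ∀ t : ℝ, t ∉ Set.Icc (-2:ℝ) (-1) → η t = 0 := by
    intro t ht
    by_contra h
    exact ht (Set.Ioo_subset_Icc_self (hηsupp t h))
  have hint : ∀ g : ℝ → ℂ, Continuous g →
      Integrable (fun t => (η t : ℂ) * g t) := by
    intro g hg
    apply Continuous.integrable_of_hasCompactSupport
    · exact (Complex.continuous_ofReal.comp η.continuous).mul hg
    · apply HasCompactSupport.intro (isCompact_Icc (a := (-2:ℝ)) (b := -1))
      intro t ht
      simp [hsupp0 t ht]
  have hset : ∀ g : ℝ → ℂ,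
      (∫ t in Set.Iic (0:ℝ), (η t : ℂ) * g t) = ∫ t, (η t : ℂ) * g t := by
    intro g
    apply setIntegral_eq_integral_of_forall_compl_eq_zero
    intro t ht
    have ht' : η t = 0 := by
      by_contra h
      exact ht (le_of_lt (lt_trans (hηsupp t h).2 (by norm_num)))
    simp [ht']
  have hηℂ : (∫ t, (η t : ℂ)) = 2 := by
    have : (∫ t, (η t : ℂ)) = ((∫ t, η t : ℝ) : ℂ) := integral_ofReal
    rw [this, hηint]
    norm_num
  constructor
  · intro z hz hz4
    have h0 : psiEps (⇑η) 0 z = 2 - Complex.I * z := by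
      unfold psiEps
      have : (∫ t in Set.Iic (0:ℝ), (η t : ℂ) * Complex.exp (-Complex.I * (0:ℝ) * t * z))
          = ∫ t in Set.Iic (0:ℝ), (η t : ℂ) * 1 := by
        apply setIntegral_congr_fun measurableSet_Iic
        intro t _
        norm_num
      rw [this, hset (fun _ => 1)]
      simp only [mul_one, hηℂ]
    have hre : (psiEps (⇑η) 0 z).re = 2 + z.im := by
      rw [h0]
      simp [Complex.sub_re, Complex.mul_re]
    exact ⟨hre, by rw [hre]; linarith⟩
  · refine ⟨1/100, by norm_num, ?_⟩
    intro ε hε hε' z hz hz4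
    set w : ℝ → ℂ := fun t => -Complex.I * ε * t * z with hw
    have hgcont : Continuous fun t : ℝ => Complex.exp (w t) - 1 := by
      apply Continuous.sub _ continuous_const
      exact Complex.continuous_exp.comp (by fun_prop)
    have hdint : Integrable (fun t => (η t : ℂ) * (Complex.exp (w t) - 1)) :=
      hint _ hgcont
    have hbound : ∀ t : ℝ, ‖(η t : ℂ) * (Complex.exp (w t) - 1)‖ ≤ (1/4) * η t := by
      intro t
      by_cases h : η t = 0
      · simp [h]
      · have ht := hηsupp t h
        have habs : ‖w t‖ ≤ 8/100 := by
          have heq : ‖w t‖ = ε * |t| * ‖z‖ := by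
            simp only [hw, norm_mul, Complex.norm_real, Real.norm_eq_abs, norm_neg, Complex.norm_I]
            rw [abs_of_pos hε]
            ring
          rw [heq]
          have h1 : |t| ≤ 2 := abs_le.2 ⟨le_of_lt ht.1, by linarith [ht.2]⟩
          calc ε * |t| * ‖z‖ ≤ (1/100) * 2 * 4 := by
                apply mul_le_mul _ hz4 (norm_nonneg z) (by norm_num)
                exact mul_le_mul hε' h1 (abs_nonneg t) (by norm_num)
          _ = 8/100 := by norm_num
        have hexp : ‖Complex.exp (w t) - 1‖ ≤ 2 * ‖w t‖ :=
          Complex.norm_exp_sub_one_le (le_trans habs (by norm_num))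
        have : ‖(η t : ℂ) * (Complex.exp (w t) - 1)‖
            = η t * ‖Complex.exp (w t) - 1‖ := by
          rw [norm_mul, Complex.norm_real, Real.norm_eq_abs, _root_.abs_of_nonneg (hη₀ t)]
        rw [this]
        calc η t * ‖Complex.exp (w t) - 1‖
            ≤ η t * (2 * (8/100)) :=
              mul_le_mul_of_nonneg_left (le_trans hexp
                (by linarith)) (hη₀ t)
          _ ≤ (1/4) * η t := by nlinarith [hη₀ t]
    have hD : ‖∫ t, (η t : ℂ) * (Complex.exp (w t) - 1)‖ ≤ 1/2 := by
      have h1 : ‖∫ t, (η t : ℂ) * (Complex.exp (w t) - 1)‖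
          ≤ ∫ t, (1/4) * η t :=
        norm_integral_le_of_norm_le (η.integrable.const_mul (1/4)) (ae_of_all _ hbound)
      rwa [MeasureTheory.integral_const_mul, hηint, show (1/4 : ℝ) * 2 = 1/2 by norm_num] at h1
    set D : ℂ := ∫ t, (η t : ℂ) * (Complex.exp (w t) - 1) with hDdef
    have hsplit : psiEps (⇑η) ε z = 2 + D - Complex.I * z := by
      unfold psiEps
      rw [hset (fun t => Complex.exp (-Complex.I * ε * t * z))]
      have heq : (∫ t, (η t : ℂ) * Complex.exp (-Complex.I * ε * t * z))
          = (∫ t, (η t : ℂ)) + D := by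
        rw [hDdef, ← integral_add (hint (fun _ => 1) continuous_const |>.congr
          (ae_of_all _ (fun t => by simp))) hdint]
        congr 1
        ext t
        rw [hw]
        ring
      rw [heq, hηℂ]
    have hDre : -(1/2) ≤ D.re := by
      have := Complex.abs_re_le_norm D
      have h2 : |D.re| ≤ 1/2 := le_trans this hD
      linarith [abs_le.1 h2 |>.1]
    have : (psiEps (⇑η) ε z).re = 2 + D.re + z.im := by
      rw [hsplit]
      simp [Complex.add_re, Complex.sub_re, Complex.mul_re]
    rw [this]
    linarith
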